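/- Since a Werner state W_f is separable iff f ≤ 1/3, the maximally entangled state (f = 1) measured with rotationally covariant devices of contrasts r_A, r_B yields statistics that are reproducible by a separable state measured with ideal devices whenever r_A·r_B ≤ 1/3; hence device-independent entanglement detection from these statistics requires r_A·r_B > 1/3. -/

import Mathlib

open Matrix Complex
open scoped Matrix Kronecker Real ComplexOrder

noncomputable section

/-- The Pauli matrix `σ_x`. -/
def σx : Matrix (Fin 2) (Fin 2) ℂ := !![0, 1; 1, 0]
/-- The Pauli matrix `σ_y`. -/
def σy : Matrix (Fin 2) (Fin 2) ℂ := !![0, -Complex.I; Complex.I, 0]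
/-- The Pauli matrix `σ_z`. -/
def σz : Matrix (Fin 2) (Fin 2) ℂ := !![1, 0; 0, -1]

/-- `U φ = exp(-i φ σ_z)`, the unitary rotation about the z-axis. -/
def U (φ : ℝ) : Matrix (Fin 2) (Fin 2) ℂ :=
  NormedSpace.exp ((-(Complex.I * (φ : ℂ))) • σz)

/-- The rotationally covariant POVM density `M_φ^r = (1/π) U_φ* (𝟙 + r σ_x) U_φ`. -/
def Mpovm (r φ : ℝ) : Matrix (Fin 2) (Fin 2) ℂ :=
  ((π : ℂ))⁻¹ • ((U φ)ᴴ * ((1 : Matrix (Fin 2) (Fin 2) ℂ) + (r : ℂ) • σx) * U φ)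

/-- A density matrix: positive semidefinite with unit trace. -/
def IsDensity {n : Type*} [Fintype n] [DecidableEq n] (ρ : Matrix n n ℂ) : Prop :=
  ρ.PosSemidef ∧ ρ.trace = 1

/-- The singlet vector `|Ψ⁻⟩ = (|01⟩ - |10⟩)/√2`. -/
def ψminus : Fin 2 × Fin 2 → ℂ := fun p =>
  if p = (0, 1) then (Real.sqrt 2)⁻¹ else if p = (1, 0) then -(Real.sqrt 2)⁻¹ else 0

/-- The projector `|Ψ⁻⟩⟨Ψ⁻|`. -/
def singletProj : Matrix (Fin 2 × Fin 2) (Fin 2 × Fin 2) ℂ :=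
  Matrix.vecMulVec ψminus (fun j => (starRingEnd ℂ) (ψminus j))

/-- The Werner state `W_f = f |Ψ⁻⟩⟨Ψ⁻| + ((1-f)/4) 𝟙₄`. -/
def Werner (f : ℝ) : Matrix (Fin 2 × Fin 2) (Fin 2 × Fin 2) ℂ :=
  (f : ℂ) • singletProj + (((1 - f) / 4 : ℝ) : ℂ) • (1 : Matrix (Fin 2 × Fin 2) (Fin 2 × Fin 2) ℂ)

/-- A separable state on `ℂ² ⊗ ℂ²`: a convex combination of product density matrices. -/
def IsSeparable2 (σ : Matrix (Fin 2 × Fin 2) (Fin 2 × Fin 2) ℂ) : Prop :=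
  ∃ (m : ℕ) (p : Fin m → ℝ) (ρA ρB : Fin m → Matrix (Fin 2) (Fin 2) ℂ),
    (∀ i, 0 ≤ p i) ∧ (∑ i, p i) = 1 ∧ (∀ i, IsDensity (ρA i)) ∧ (∀ i, IsDensity (ρB i)) ∧
      σ = ∑ i, ((p i : ℝ) : ℂ) • (ρA i ⊗ₖ ρB i)

/-! ### Auxiliary material -/

lemma U_eq (φ : ℝ) : U φ = !![Complex.exp (-(I*φ)), 0; 0, Complex.exp (I*φ)] := by
  have h1 : ((-(Complex.I * (φ : ℂ))) • σz) = Matrix.diagonal ![-(I*φ), I*φ] := by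
    ext i j
    fin_cases i <;> fin_cases j <;> simp [σz, Matrix.diagonal]
  rw [U, h1, Matrix.exp_diagonal]
  ext i j
  fin_cases i <;> fin_cases j <;>
    simp [Matrix.diagonal, Pi.exp_def, ← Complex.exp_eq_exp_ℂ]

lemma Mpovm_eq (r φ : ℝ) : Mpovm r φ =
    ((π : ℂ))⁻¹ • !![1, r * Complex.exp (2*(I*φ)); r * (Complex.exp (2*(I*φ)))⁻¹, 1] := by
  rw [Mpovm, U_eq]
  congr 1
  ext i j
  fin_cases i <;> fin_cases j <;>
    simp [Matrix.mul_apply, Fin.sum_univ_two, σx, ← Complex.exp_conj, ← Complex.exp_add,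
      ← Complex.exp_neg, Complex.exp_ne_zero, _root_.map_mul, map_neg, Complex.conj_I,
      Complex.conj_ofReal] <;> ring_nf <;>
    rw [sq, ← Complex.exp_add] <;> ring_nf

lemma trace_werner (f a b φ ψ : ℝ) :
    (Werner f * (Mpovm a φ ⊗ₖ Mpovm b ψ)).trace
      = (π:ℂ)⁻¹ * (π:ℂ)⁻¹ * (1 - ((f*a*b : ℝ) / 2) *
          (Complex.exp (2*(I*φ)) * (Complex.exp (2*(I*ψ)))⁻¹
            + (Complex.exp (2*(I*φ)))⁻¹ * Complex.exp (2*(I*ψ)))) := by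
  have h2 : ((Real.sqrt 2 : ℝ) : ℂ) * ((Real.sqrt 2 : ℝ) : ℂ) = 2 := by
    rw [← Complex.ofReal_mul, Real.mul_self_sqrt (by norm_num)]; norm_num
  have hs : ((Real.sqrt 2 : ℝ) : ℂ) ≠ 0 := by
    intro hc
    rw [hc, mul_zero] at h2; exact two_ne_zero h2.symm
  have heφ := Complex.exp_ne_zero (2*(I*φ))
  have heψ := Complex.exp_ne_zero (2*(I*ψ))
  rw [Mpovm_eq, Mpovm_eq]
  simp only [Matrix.trace, Matrix.diag, Matrix.mul_apply, Werner, singletProj, ψminus,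
    Matrix.vecMulVec_apply, Matrix.add_apply, Matrix.smul_apply, Matrix.one_apply,
    Matrix.kroneckerMap_apply, Fintype.sum_prod_type, Fin.sum_univ_two, smul_eq_mul,
    map_inv₀, map_neg, Complex.conj_ofReal]
  norm_num [Fin.ext_iff, Prod.ext_iff]
  field_simp
  ring_nf
  linear_combination (-8*Complex.exp (I*(ψ:ℂ)*2)*Complex.exp (I*(φ:ℂ)*2)*f
      + 4*f*a*b*(Complex.exp (I*(ψ:ℂ)*2)^2 + Complex.exp (I*(φ:ℂ)*2)^2)) * h2

/-! ### The product-state ingredients -/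

def rhoXp : Matrix (Fin 2) (Fin 2) ℂ := !![1/2, 1/2; 1/2, 1/2]
def rhoXm : Matrix (Fin 2) (Fin 2) ℂ := !![1/2, -(1/2); -(1/2), 1/2]
def rhoYp : Matrix (Fin 2) (Fin 2) ℂ := !![1/2, -(I/2); I/2, 1/2]
def rhoYm : Matrix (Fin 2) (Fin 2) ℂ := !![1/2, I/2; -(I/2), 1/2]
def rhoZp : Matrix (Fin 2) (Fin 2) ℂ := !![1, 0; 0, 0]
def rhoZm : Matrix (Fin 2) (Fin 2) ℂ := !![0, 0; 0, 1]
def rhoM : Matrix (Fin 2) (Fin 2) ℂ := !![1/2, 0; 0, 1/2]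

theorem Matrix.posSemidef_iff_eq_transpose_mul_self {n : Type*} [Fintype n] [DecidableEq n]
    {A : Matrix n n ℂ} : A.PosSemidef ↔ ∃ B : Matrix n n ℂ, A = Bᴴ * B := by
  open scoped MatrixOrder in
  constructor
  · intro hA
    obtain ⟨B, hB⟩ := CStarAlgebra.nonneg_iff_eq_star_mul_self.mp hA.nonneg
    exact ⟨B, hB⟩
  · rintro ⟨B, rfl⟩; exact Matrix.posSemidef_conjTranspose_mul_self B

lemma dens_rhoXp : IsDensity rhoXp := by
  constructor
  · rw [Matrix.posSemidef_iff_eq_transpose_mul_self]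
    exact ⟨rhoXp, by ext i j; fin_cases i <;> fin_cases j <;>
      simp [rhoXp, Matrix.mul_apply, Fin.sum_univ_two, map_ofNat, map_div₀] <;> norm_num⟩
  · simp [Matrix.trace, Fin.sum_univ_two, rhoXp]; norm_num

lemma dens_rhoXm : IsDensity rhoXm := by
  constructor
  · rw [Matrix.posSemidef_iff_eq_transpose_mul_self]
    exact ⟨rhoXm, by ext i j; fin_cases i <;> fin_cases j <;>
      simp [rhoXm, Matrix.mul_apply, Fin.sum_univ_two, map_ofNat, map_div₀] <;> norm_num⟩
  · simp [Matrix.trace, Fin.sum_univ_two, rhoXm]; norm_num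

lemma dens_rhoYp : IsDensity rhoYp := by
  constructor
  · rw [Matrix.posSemidef_iff_eq_transpose_mul_self]
    exact ⟨rhoYp, by ext i j; fin_cases i <;> fin_cases j <;>
      simp [rhoYp, Matrix.mul_apply, Fin.sum_univ_two, map_ofNat, map_div₀, Complex.conj_I] <;>
      ring_nf <;> simp [Complex.I_sq] <;> ring_nf⟩
  · simp [Matrix.trace, Fin.sum_univ_two, rhoYp]; norm_num

lemma dens_rhoYm : IsDensity rhoYm := by
  constructor
  · rw [Matrix.posSemidef_iff_eq_transpose_mul_self]
    exact ⟨rhoYm, by ext i j; fin_cases i <;> fin_cases j <;>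
      simp [rhoYm, Matrix.mul_apply, Fin.sum_univ_two, map_ofNat, map_div₀, Complex.conj_I] <;>
      ring_nf <;> simp [Complex.I_sq] <;> ring_nf⟩
  · simp [Matrix.trace, Fin.sum_univ_two, rhoYm]; norm_num

lemma dens_rhoZp : IsDensity rhoZp := by
  constructor
  · rw [Matrix.posSemidef_iff_eq_transpose_mul_self]
    exact ⟨rhoZp, by ext i j; fin_cases i <;> fin_cases j <;>
      simp [rhoZp, Matrix.mul_apply, Fin.sum_univ_two]⟩
  · simp [Matrix.trace, Fin.sum_univ_two, rhoZp]

lemma dens_rhoZm : IsDensity rhoZm := by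
  constructor
  · rw [Matrix.posSemidef_iff_eq_transpose_mul_self]
    exact ⟨rhoZm, by ext i j; fin_cases i <;> fin_cases j <;>
      simp [rhoZm, Matrix.mul_apply, Fin.sum_univ_two]⟩
  · simp [Matrix.trace, Fin.sum_univ_two, rhoZm]

lemma dens_rhoM : IsDensity rhoM := by
  constructor
  · rw [Matrix.posSemidef_iff_eq_transpose_mul_self]
    exact ⟨!![1/2, 1/2; -(1/2), 1/2], by ext i j; fin_cases i <;> fin_cases j <;>
      simp [rhoM, Matrix.mul_apply, Fin.sum_univ_two, map_ofNat, map_div₀] <;> norm_num⟩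
  · simp [Matrix.trace, Fin.sum_univ_two, rhoM]; norm_num

def SP : Matrix (Fin 2 × Fin 2) (Fin 2 × Fin 2) ℂ :=
  Matrix.of fun p q =>
    (if p = (0,1) then 1 else if p = (1,0) then -1 else 0) *
    (if q = (0,1) then 1 else if q = (1,0) then -1 else 0) / 2

lemma singletProj_eq : singletProj = SP := by
  have h2 : ((Real.sqrt 2 : ℝ) : ℂ) * ((Real.sqrt 2 : ℝ) : ℂ) = 2 := by
    rw [← Complex.ofReal_mul, Real.mul_self_sqrt (by norm_num)]; norm_num
  have hs : ((Real.sqrt 2 : ℝ) : ℂ) ≠ 0 := fun hc => by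
    rw [hc, mul_zero] at h2; exact two_ne_zero h2.symm
  ext ⟨i, j⟩ ⟨k, l⟩
  fin_cases i <;> fin_cases j <;> fin_cases k <;> fin_cases l <;>
    simp [singletProj, SP, ψminus, Matrix.vecMulVec_apply, Prod.ext_iff, Fin.ext_iff, - Fin.val_eq_zero_iff,
      map_inv₀, Complex.conj_ofReal] <;>
    field_simp <;> first
      | rfl
      | linear_combination (-2:ℂ)*h2
      | linear_combination (2:ℂ)*h2
      | linear_combination h2
      | linear_combination -h2
      | ring

/-- The weights of the separable decomposition. -/
def wt (f : ℝ) : Fin 7 → ℝ := ![f/2, f/2, f/2, f/2, f/2, f/2, 1-3*f]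
/-- Alice's states. -/
def stA : Fin 7 → Matrix (Fin 2) (Fin 2) ℂ := ![rhoXp, rhoXm, rhoYp, rhoYm, rhoZp, rhoZm, rhoM]
/-- Bob's states. -/
def stB : Fin 7 → Matrix (Fin 2) (Fin 2) ℂ := ![rhoXm, rhoXp, rhoYm, rhoYp, rhoZm, rhoZp, rhoM]

set_option maxHeartbeats 2000000 in
lemma werner_decomp (f : ℝ) :
    Werner f = ∑ i : Fin 7, ((wt f i : ℝ) : ℂ) • (stA i ⊗ₖ stB i) := by
  rw [Werner, singletProj_eq]
  ext ⟨i, j⟩ ⟨k, l⟩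
  simp only [wt, stA, stB, Matrix.add_apply, Matrix.smul_apply, Matrix.sum_apply,
    Fin.sum_univ_succ, Fin.sum_univ_zero,
    Matrix.kroneckerMap_apply, Matrix.one_apply, smul_eq_mul,
    Matrix.cons_val_zero, Matrix.cons_val_one, Matrix.head_cons, Matrix.cons_val_succ]
  fin_cases i <;> fin_cases j <;> fin_cases k <;> fin_cases l <;>
    simp [SP, rhoXp, rhoXm, rhoYp, rhoYm, rhoZp, rhoZm, rhoM, Prod.ext_iff, Fin.ext_iff, - Fin.val_eq_zero_iff] <;>
    push_cast <;> first
      | ring1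
      | (ring_nf; simp [Complex.I_sq]; try ring1)

/-! ### Positive semidefiniteness facts -/

lemma kron_conjTranspose {n m : Type*} [Fintype n] [Fintype m]
    (A : Matrix n n ℂ) (B : Matrix m m ℂ) : (A ⊗ₖ B)ᴴ = Aᴴ ⊗ₖ Bᴴ := by
  ext ⟨i, j⟩ ⟨k, l⟩
  simp [Matrix.conjTranspose_apply, Matrix.kroneckerMap_apply, mul_comm]

lemma psd_kron {n m : Type*} [Fintype n] [Fintype m] [DecidableEq n] [DecidableEq m]
    {A : Matrix n n ℂ} {B : Matrix m m ℂ}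
    (hA : A.PosSemidef) (hB : B.PosSemidef) : (A ⊗ₖ B).PosSemidef := by
  obtain ⟨C, rfl⟩ := Matrix.posSemidef_iff_eq_transpose_mul_self.mp hA
  obtain ⟨D, rfl⟩ := Matrix.posSemidef_iff_eq_transpose_mul_self.mp hB
  rw [Matrix.mul_kronecker_mul, ← kron_conjTranspose]
  exact Matrix.posSemidef_conjTranspose_mul_self _

lemma psd_smul {n : Type*} [Fintype n] [DecidableEq n] {A : Matrix n n ℂ}
    (hA : A.PosSemidef) {c : ℝ} (hc : 0 ≤ c) : ((c : ℂ) • A).PosSemidef := by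
  constructor
  · unfold Matrix.IsHermitian
    rw [Matrix.conjTranspose_smul, hA.1.eq, Complex.star_def, Complex.conj_ofReal]
  · intro x
    exact (hA.smul (by exact_mod_cast Complex.zero_le_real.mpr hc : (0:ℂ) ≤ (c:ℂ))).2 x

lemma psd_zero {n : Type*} [Fintype n] [DecidableEq n] :
    (0 : Matrix n n ℂ).PosSemidef := by
  constructor
  · simp [Matrix.IsHermitian]
  · intro x; simp

lemma psd_add {n : Type*} [Fintype n] [DecidableEq n] {A B : Matrix n n ℂ}
    (hA : A.PosSemidef) (hB : B.PosSemidef) : (A + B).PosSemidef := by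
  constructor
  · exact hA.1.add hB.1
  · intro x
    exact (hA.add hB).2 x

lemma psd_sum {n : Type*} [Fintype n] [DecidableEq n] {m : ℕ}
    (M : Fin m → Matrix n n ℂ) (h : ∀ i, (M i).PosSemidef) : (∑ i, M i).PosSemidef :=
  Finset.sum_induction M _ (fun _ _ ha hb => psd_add ha hb) psd_zero (fun i _ => h i)

/-! ### Main theorem -/

/-- if `r_A r_B ≤ 1/3`, the statistics of the maximally entangled state
(`f = 1`) measured with contrasts `r_A, r_B` are reproducible by a separable state measured
with ideal devices; hence device-independent entanglement detection requires
`r_A r_B > 1/3`. -/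
theorem separable_reproduction_below_threshold (rA rB : ℝ)
    (hrA : rA ∈ Set.Icc (0:ℝ) 1) (hrB : rB ∈ Set.Icc (0:ℝ) 1) (h : rA * rB ≤ 1 / 3) :
    ∃ σ : Matrix (Fin 2 × Fin 2) (Fin 2 × Fin 2) ℂ, IsSeparable2 σ ∧ IsDensity σ ∧
      ∀ φ ψ : ℝ, (σ * (Mpovm 1 φ ⊗ₖ Mpovm 1 ψ)).trace
        = (Werner 1 * (Mpovm rA φ ⊗ₖ Mpovm rB ψ)).trace := by
  set f : ℝ := rA * rB with hf
  have hf0 : 0 ≤ f := mul_nonneg hrA.1 hrB.1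
  have hdA : ∀ i, IsDensity (stA i) := by
    intro i
    fin_cases i <;>
      first
        | exact dens_rhoXp | exact dens_rhoXm | exact dens_rhoYp | exact dens_rhoYm
        | exact dens_rhoZp | exact dens_rhoZm | exact dens_rhoM
  have hdB : ∀ i, IsDensity (stB i) := by
    intro i
    fin_cases i <;>
      first
        | exact dens_rhoXp | exact dens_rhoXm | exact dens_rhoYp | exact dens_rhoYm
        | exact dens_rhoZp | exact dens_rhoZm | exact dens_rhoM
  have hw0 : ∀ i, 0 ≤ wt f i := by
    intro i
    fin_cases i <;> norm_num [wt] <;> linarith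
  refine ⟨Werner f, ⟨7, wt f, stA, stB, hw0, ?_, hdA, hdB, werner_decomp f⟩, ⟨?_, ?_⟩, ?_⟩
  · simp [wt, Fin.sum_univ_succ]; ring
  · rw [werner_decomp f]
    exact psd_sum _ fun i => psd_smul (psd_kron (hdA i).1 (hdB i).1) (hw0 i)
  · rw [werner_decomp f]
    have ht : ∀ i : Fin 7, ((stA i) ⊗ₖ (stB i)).trace = 1 := by
      intro i
      rw [Matrix.trace_kronecker, (hdA i).2, (hdB i).2, mul_one]
    simp only [Matrix.trace_sum, Matrix.trace_smul, ht, smul_eq_mul, mul_one]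
    have : ∑ i : Fin 7, ((wt f i : ℝ) : ℂ) = ((∑ i : Fin 7, wt f i : ℝ) : ℂ) := by
      push_cast; ring
    rw [this]
    norm_cast
    simp [wt, Fin.sum_univ_succ]; ring
  · intro φ ψ
    rw [trace_werner f 1 1 φ ψ, trace_werner 1 rA rB φ ψ]
    norm_num
    left
    rw [hf]; push_cast; ring
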